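/- Let x₁ < x₂ < x₃ and 0 < y₂ < y₃ be real numbers with x₃ = y₂ + y₃ − x₁ − x₂, set y₁ = 0, q = (x₁x₂ + x₁x₃ + x₂x₃ − y₂y₃)/2, and let q₁, q₂ be real numbers with q₁ − q₂ = q. Define X(t) = −4(t − x₁)(t − x₂)(t − x₃), Y(t) = −4 t (t − y₂)(t − y₃), and the vectors in ℝ³: v_i = (2/X′(x_i)) · (q₁ + x_i², −x_i, 1) for i = 1, 2, and ℓ_j = (2/Y′(y_j)) · (q₂ + y_j², −y_j, 1) for j = 2, 3. Set n₁ = (x₃ − x₁)(q + (x₂ − y₂)(x₂ − y₃)), n₂ = (x₃ − x₂)(q + (x₁ − y₂)(x₁ − y₃)), m₁ = y₂ (q − (x₁ − y₃)(x₂ − y₃)), m₂ = y₃ (q − (x₁ − y₂)(x₂ − y₂)). Then n₁ v₁ + n₂ v₂ + m₁ ℓ₂ + m₂ ℓ₃ = 0 in ℝ³. -/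

import Mathlib

lemma frac4 (N₁ N₂ N₃ N₄ D₁ D₂ D₃ D₄ : ℝ) (h1 : D₁ ≠ 0) (h2 : D₂ ≠ 0)
    (h3 : D₃ ≠ 0) (h4 : D₄ ≠ 0)
    (h : N₁ * (D₂ * D₃ * D₄) + N₂ * (D₁ * D₃ * D₄) + N₃ * (D₁ * D₂ * D₄)
        + N₄ * (D₁ * D₂ * D₃) = 0) :
    N₁ * (2 / D₁) + N₂ * (2 / D₂) + N₃ * (2 / D₃) + N₄ * (2 / D₄) = 0 := by
  field_simp
  linarith [h]

set_option maxHeartbeats 1000000 in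
lemma comp16 (x₁ x₂ y₂ y₃ a₁ a₂ a₃ a₄ : ℝ)
    (h12 : x₁ - x₂ ≠ 0) (h13 : x₁ - (y₂ + y₃ - x₁ - x₂) ≠ 0)
    (h23 : x₂ - (y₂ + y₃ - x₁ - x₂) ≠ 0) (hy2 : y₂ ≠ 0) (hy3 : y₃ ≠ 0)
    (hyy : y₂ - y₃ ≠ 0)
    (h : ((((y₂ + y₃ - x₁ - x₂) - x₁) * (((x₁ * x₂ + x₁ * (y₂ + y₃ - x₁ - x₂) + x₂ * (y₂ + y₃ - x₁ - x₂) - y₂ * y₃) / 2) + (x₂ - y₂) * (x₂ - y₃)))* a₁) * ((-4 * (x₂ - x₁) * (x₂ - (y₂ + y₃ - x₁ - x₂))) * (-4 * y₂ * (y₂ - y₃)) * (-4 * y₃ * (y₃ - y₂))) + ((((y₂ + y₃ - x₁ - x₂) - x₂) * (((x₁ * x₂ + x₁ * (y₂ + y₃ - x₁ - x₂) + x₂ * (y₂ + y₃ - x₁ - x₂) - y₂ * y₃) / 2) + (x₁ - y₂) * (x₁ - y₃)))* a₂) * ((-4 * (x₁ - x₂) * (x₁ - (y₂ + y₃ - x₁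 - x₂))) * (-4 * y₂ * (y₂ - y₃)) * (-4 * y₃ * (y₃ - y₂))) + ((y₂ * (((x₁ * x₂ + x₁ * (y₂ + y₃ - x₁ - x₂) + x₂ * (y₂ + y₃ - x₁ - x₂) - y₂ * y₃) / 2) - (x₁ - y₃) * (x₂ - y₃)))* a₃) * ((-4 * (x₁ - x₂) * (x₁ - (y₂ + y₃ - x₁ - x₂))) * (-4 * (x₂ - x₁) * (x₂ - (y₂ + y₃ - x₁ - x₂))) * (-4 * y₃ * (y₃ - y₂))) + ((y₃ * (((x₁ * x₂ + x₁ * (y₂ + y₃ - x₁ - x₂) + x₂ * (y₂ + y₃ - x₁ - x₂) - y₂ * y₃) / 2) - (x₁ - y₂) * (x₂ - y₂)))* a₄) * ((-4 * (x₁ - x₂) * (x₁ - (y₂ + y₃ - x₁ - x₂))) * (-4 * (x₂ - x₁) * (x₂ - (y₂ + y₃ - x₁ - x₂))) * (-4 * y₂ * (y₂ - y₃))) = 0) :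
    (((y₂ + y₃ - x₁ - x₂) - x₁) * (((x₁ * x₂ + x₁ * (y₂ + y₃ - x₁ - x₂) + x₂ * (y₂ + y₃ - x₁ - x₂) - y₂ * y₃) / 2) + (x₂ - y₂) * (x₂ - y₃))) * (2 / (-4 * (x₁ - x₂) * (x₁ - (y₂ + y₃ - x₁ - x₂))) * a₁) + (((y₂ + y₃ - x₁ - x₂) - x₂) * (((x₁ * x₂ + x₁ * (y₂ + y₃ - x₁ - x₂) + x₂ * (y₂ + y₃ - x₁ - x₂) - y₂ * y₃) / 2) + (x₁ - y₂) * (x₁ - y₃))) * (2 / (-4 * (x₂ - x₁) * (x₂ - (y₂ + y₃ - x₁ - x₂))) * a₂) + (y₂ * (((x₁ * x₂ + x₁ * (y₂ + y₃ - x₁ - x₂) + x₂ * (y₂ + y₃ - x₁ - x₂) - y₂ * y₃) / 2) - (x₁ - y₃) * (x₂ - y₃))) * (2 / (-4 * y₂ * (y₂ - y₃)) * a₃) + (y₃ * (((x₁ * x₂ + x₁ * (y₂ + y₃ - x₁ - x₂) + x₂ * (y₂ + y₃ - x₁ - x₂) - y₂ * y₃) / 2) - (x₁ - y₂) * (x₂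 - y₂))) * (2 / (-4 * y₃ * (y₃ - y₂)) * a₄) = 0 := by
  have h21 : x₂ - x₁ ≠ 0 := fun h => h12 (by linarith [sub_eq_zero.mp h])
  have h32 : y₃ - y₂ ≠ 0 := fun h => hyy (by linarith [sub_eq_zero.mp h])
  have hD1 := mul_ne_zero (mul_ne_zero (by norm_num : (-4:ℝ) ≠ 0) h12) h13
  have hD2 := mul_ne_zero (mul_ne_zero (by norm_num : (-4:ℝ) ≠ 0) h21) h23
  have hD3 := mul_ne_zero (mul_ne_zero (by norm_num : (-4:ℝ) ≠ 0) hy2) hyy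
  have hD4 := mul_ne_zero (mul_ne_zero (by norm_num : (-4:ℝ) ≠ 0) hy3) h32
  have key := frac4 ((((y₂ + y₃ - x₁ - x₂) - x₁) * (((x₁ * x₂ + x₁ * (y₂ + y₃ - x₁ - x₂) + x₂ * (y₂ + y₃ - x₁ - x₂) - y₂ * y₃) / 2) + (x₂ - y₂) * (x₂ - y₃)))* a₁) ((((y₂ + y₃ - x₁ - x₂) - x₂) * (((x₁ * x₂ + x₁ * (y₂ + y₃ - x₁ - x₂) + x₂ * (y₂ + y₃ - x₁ - x₂) - y₂ * y₃) / 2) + (x₁ - y₂) * (x₁ - y₃)))* a₂) ((y₂ * (((x₁ * x₂ + x₁ * (y₂ + y₃ - x₁ - x₂) + x₂ * (y₂ + y₃ - x₁ - x₂) - y₂ * y₃) / 2) - (x₁ - y₃) * (x₂ - y₃)))* a₃) ((y₃ * (((x₁ * x₂ + x₁ * (y₂ + y₃ - x₁ - x₂) + x₂ * (y₂ + y₃ - x₁ - x₂) - y₂ * y₃) / 2) - (x₁ - y₂) * (x₂ - y₂)))* a₄)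
    (-4 * (x₁ - x₂) * (x₁ - (y₂ + y₃ - x₁ - x₂))) (-4 * (x₂ - x₁) * (x₂ - (y₂ + y₃ - x₁ - x₂))) (-4 * y₂ * (y₂ - y₃)) (-4 * y₃ * (y₃ - y₂)) hD1 hD2 hD3 hD4 h
  linear_combination key

lemma dcubic (a b c t : ℝ) :
    HasDerivAt (fun s : ℝ => -4 * (s - a) * (s - b) * (s - c))
      (-4 * ((t - b) * (t - c) + (t - a) * (t - c) + (t - a) * (t - b))) t := by
  have h1 : HasDerivAt (fun s : ℝ => -4 * (s - a)) (-4) t := by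
    simpa using ((hasDerivAt_id t).sub_const a).const_mul (-4)
  have h2 : HasDerivAt (fun s : ℝ => s - b) 1 t := (hasDerivAt_id t).sub_const b
  have h3 : HasDerivAt (fun s : ℝ => s - c) 1 t := (hasDerivAt_id t).sub_const c
  have : HasDerivAt (fun s : ℝ => -4 * (s - a) * (s - b) * (s - c))
      ((-4 * (t - b) + -4 * (t - a) * 1) * (t - c) + (-4 * (t - a) * (t - b)) * 1) t :=
    (h1.mul h2).mul h3
  convert this using 1
  ring

set_option maxHeartbeats 1000000 in
/-- The linear relation `n₁ v₁ + n₂ v₂ + m₁ ℓ₂ + m₂ ℓ₃ = 0` in `ℝ³`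
among the (components of the) normalized Killing vector fields of the
five-dimensional minimal gauged supergravity solution. -/
theorem statement16 (x₁ x₂ x₃ y₂ y₃ q q₁ q₂ : ℝ)
    (hx12 : x₁ < x₂) (hx23 : x₂ < x₃) (hy2 : 0 < y₂) (hy23 : y₂ < y₃)
    (hxy : x₂ < y₂)
    (hsum : x₃ = y₂ + y₃ - x₁ - x₂)
    (hqdef : q = (x₁ * x₂ + x₁ * x₃ + x₂ * x₃ - y₂ * y₃) / 2)
    (hq12 : q₁ - q₂ = q)
    (X Y : ℝ → ℝ)
    (hX : ∀ t, X t = -4 * (t - x₁) * (t - x₂) * (t - x₃))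
    (hY : ∀ t, Y t = -4 * t * (t - y₂) * (t - y₃))
    (v₁ v₂ ℓ₂ ℓ₃ : Fin 3 → ℝ)
    (hv₁ : v₁ = (2 / deriv X x₁) • ![q₁ + x₁ ^ 2, -x₁, 1])
    (hv₂ : v₂ = (2 / deriv X x₂) • ![q₁ + x₂ ^ 2, -x₂, 1])
    (hℓ₂ : ℓ₂ = (2 / deriv Y y₂) • ![q₂ + y₂ ^ 2, -y₂, 1])
    (hℓ₃ : ℓ₃ = (2 / deriv Y y₃) • ![q₂ + y₃ ^ 2, -y₃, 1])
    (n₁ n₂ m₁ m₂ : ℝ)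
    (hn₁ : n₁ = (x₃ - x₁) * (q + (x₂ - y₂) * (x₂ - y₃)))
    (hn₂ : n₂ = (x₃ - x₂) * (q + (x₁ - y₂) * (x₁ - y₃)))
    (hm₁ : m₁ = y₂ * (q - (x₁ - y₃) * (x₂ - y₃)))
    (hm₂ : m₂ = y₃ * (q - (x₁ - y₂) * (x₂ - y₂))) :
    n₁ • v₁ + n₂ • v₂ + m₁ • ℓ₂ + m₂ • ℓ₃ = 0 := by
  have hXf : X = fun s : ℝ => -4 * (s - x₁) * (s - x₂) * (s - x₃) := funext hX
  have hYf : Y = fun s : ℝ => -4 * (s - 0) * (s - y₂) * (s - y₃) := by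
    funext s; rw [hY]; ring
  have hd1 : deriv X x₁ = -4 * (x₁ - x₂) * (x₁ - x₃) := by
    rw [hXf, (dcubic x₁ x₂ x₃ x₁).deriv]; ring
  have hd2 : deriv X x₂ = -4 * (x₂ - x₁) * (x₂ - x₃) := by
    rw [hXf, (dcubic x₁ x₂ x₃ x₂).deriv]; ring
  have hd3 : deriv Y y₂ = -4 * y₂ * (y₂ - y₃) := by
    rw [hYf, (dcubic 0 y₂ y₃ y₂).deriv]; ring
  have hd4 : deriv Y y₃ = -4 * y₃ * (y₃ - y₂) := by
    rw [hYf, (dcubic 0 y₂ y₃ y₃).deriv]; ring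
  have hq2 : q₂ = q₁ - q := by linarith
  subst hv₁ hv₂ hℓ₂ hℓ₃ hn₁ hn₂ hm₁ hm₂ hq2 hsum hqdef
  have h12 : x₁ - x₂ ≠ 0 := sub_ne_zero.mpr hx12.ne
  have h13 : x₁ - (y₂ + y₃ - x₁ - x₂) ≠ 0 := sub_ne_zero.mpr (hx12.trans hx23).ne
  have h23 : x₂ - (y₂ + y₃ - x₁ - x₂) ≠ 0 := sub_ne_zero.mpr hx23.ne
  have hy2' : y₂ ≠ 0 := hy2.ne'
  have hy3' : y₃ ≠ 0 := (hy2.trans hy23).ne'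
  have hyy : y₂ - y₃ ≠ 0 := sub_ne_zero.mpr hy23.ne
  funext i
  rw [hd1, hd2, hd3, hd4]
  fin_cases i
  · simp only [Fin.zero_eta, Fin.mk_one, Fin.reduceFinMk, Fin.isValue, Pi.add_apply, Pi.smul_apply, smul_eq_mul, Pi.zero_apply,
      Matrix.cons_val_zero, Matrix.cons_val_one, Matrix.head_cons,
      Matrix.cons_val_two, Matrix.tail_cons]
    linear_combination comp16 x₁ x₂ y₂ y₃ (q₁ + x₁ ^ 2) (q₁ + x₂ ^ 2) (q₁ - ((x₁ * x₂ + x₁ * (y₂ + y₃ - x₁ - x₂) + x₂ * (y₂ + y₃ - x₁ - x₂) - y₂ * y₃) / 2) + y₂ ^ 2) (q₁ - ((x₁ * x₂ + x₁ * (y₂ + y₃ - x₁ - x₂) + x₂ * (y₂ + y₃ - x₁ - x₂) - y₂ * y₃) / 2) + y₃ ^ 2) h12 h13 h23 hy2' hy3' hyy (by ring)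
  · simp only [Fin.zero_eta, Fin.mk_one, Fin.reduceFinMk, Fin.isValue, Pi.add_apply, Pi.smul_apply, smul_eq_mul, Pi.zero_apply,
      Matrix.cons_val_zero, Matrix.cons_val_one, Matrix.head_cons,
      Matrix.cons_val_two, Matrix.tail_cons]
    linear_combination comp16 x₁ x₂ y₂ y₃ (-x₁) (-x₂) (-y₂) (-y₃) h12 h13 h23 hy2' hy3' hyy (by ring)
  · simp only [Fin.zero_eta, Fin.mk_one, Fin.reduceFinMk, Fin.isValue, Pi.add_apply, Pi.smul_apply, smul_eq_mul, Pi.zero_apply,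
      Matrix.cons_val_zero, Matrix.cons_val_one, Matrix.head_cons,
      Matrix.cons_val_two, Matrix.tail_cons]
    linear_combination comp16 x₁ x₂ y₂ y₃ (1:ℝ) 1 1 1 h12 h13 h23 hy2' hy3' hyy (by ring)
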